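/- With the construction parameters as above and D satisfying the no-nontrivial-solution property (d_0 + ... + d_{r-1} = r·d_r in D implies all equal), let A = ∪_{i=0}^r D_i and suppose b_0, ..., b_r ∈ A are distinct elements summing to 0 mod N. Then exactly one of the b_i lies in D_r. -/

import Mathlib

lemma two_mul_choose_two' (n : ℕ) : 2 * n.choose 2 = n * (n-1) := by
  induction n with
  | zero => rfl
  | succ m ih =>
    rw [Nat.choose_succ_succ, Nat.choose_one_right, Nat.mul_add, ih]
    cases m with
    | zero => rfl
    | succ p => simp [Nat.succ_sub_one]; ring

lemma auxG1' (e l d : ℕ) (he1 : 1 ≤ e) (hrdl : (e+1)*d ≤ l) :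
    ((e+1)+1) * (e*l + d) ≤ (e+1)^3 * l := by
  have hdd : (e+2)*d ≤ 2*l := by
    calc (e+2)*d ≤ (2*(e+1))*d := Nat.mul_le_mul_right _ (by omega)
    _ = 2*((e+1)*d) := by ring
    _ ≤ 2*l := by omega
  have hcoef : ((e+2)*e + 2) * l ≤ (e+1)^3 * l := by
    refine Nat.mul_le_mul_right _ ?_
    obtain ⟨f, rfl⟩ : ∃ f, e = f+1 := ⟨e-1, by omega⟩
    nlinarith [Nat.zero_le (f*f*f), Nat.zero_le (f*f), Nat.zero_le f]
  nlinarith [hdd, hcoef]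

lemma auxG2' (e l d c : ℕ) (he1 : 1 ≤ e) (hrdl : (e+1)*d ≤ l) (hc2 : 2*c = (e+1)*e) :
    2*((((e+1)+1)) * (c*l + (e+1)*d)) ≤ 2*((e+1)^3 * l) := by
  have h1 : 2*(e+2)*((e+1)*d) ≤ 2*(e+2)*l := Nat.mul_le_mul_left _ hrdl
  have hcoef2 : ((e+1)*e*(e+2) + 2*(e+2)) * l ≤ 2*((e+1)^3*l) := by
    rw [← mul_assoc]
    refine Nat.mul_le_mul_right _ ?_
    obtain ⟨f, rfl⟩ : ∃ f, e = f+1 := ⟨e-1, by omega⟩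
    nlinarith [Nat.zero_le (f*f*f), Nat.zero_le (f*f), Nat.zero_le f]
  have hexp : 2*(((e+1)+1) * (c*l + (e+1)*d)) = (2*c)*((e+2)*l) + 2*(e+2)*((e+1)*d) := by ring
  rw [hexp, hc2]
  nlinarith [h1, hcoef2]

/-- If `b₀,…,b_r` are distinct elements of `A = ⋃ᵢ Dᵢ` (as integers in `{0,…,N-1}`)
summing to `0 mod N`, and `D` has the no-nontrivial-solution property, then exactly one
of the `bᵢ` lies in `D_r`. -/
theorem statement6 (N r : ℕ) (hN : 0 < N) (hr : 2 ≤ r) (lam del : ℝ)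
    (hlam0 : 0 < lam) (hlam1 : lam < 1 / (r : ℝ) ^ 3)
    (hdel0 : 0 < del) (hdel1 : del < lam / r)
    (d l : ℕ) (hd : d = ⌊del * N⌋₊) (hl : l = ⌊lam * N⌋₊)
    (D : Finset ℕ) (hD : D ⊆ Finset.Icc 1 d)
    (hprop : ∀ f : ℕ → ℕ, (∀ i ≤ r, f i ∈ D) →
      (∑ i ∈ Finset.range r, f i) = r * f r → ∀ i ≤ r, f i = f 0)
    (Dr : Finset ℕ) (hDr : Dr = D.image (fun x => N - r.choose 2 * l - r * x))
    (A : Finset ℕ)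
    (hA : A = ((Finset.range r).biUnion fun i => D.image fun x => i * l + x) ∪ Dr)
    (b : Fin (r + 1) → ℕ) (hinj : Function.Injective b)
    (hbA : ∀ i, b i ∈ A) (hsum : (∑ i, b i) % N = 0) :
    ∃! i : Fin (r + 1), b i ∈ Dr := by
  classical
  have hr0 : 0 < r := by omega
  set c := r.choose 2 with hc
  have hc2 : 2 * c = r * (r - 1) := two_mul_choose_two' r
  obtain ⟨e, he1, hre⟩ : ∃ e, 1 ≤ e ∧ r = e + 1 := ⟨r - 1, by omega, by omega⟩
  have hsub : r - 1 = e := by omega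
  -- real number facts
  have hN0 : (0:ℝ) < (N:ℝ) := by exact_mod_cast hN
  have hrR : (0:ℝ) < (r:ℝ) := by exact_mod_cast hr0
  have hdle : (d:ℝ) ≤ del * N := by
    rw [hd]; exact Nat.floor_le (by positivity)
  have hlle : (l:ℝ) ≤ lam * N := by
    rw [hl]; exact Nat.floor_le (by positivity)
  have hrdl : r * d ≤ l := by
    rw [hl]
    apply Nat.le_floor
    rw [lt_div_iff₀ hrR] at hdel1
    push_cast
    nlinarith
  have hlN : r ^ 3 * l < N := by
    have hr3 : (0:ℝ) < (r:ℝ)^3 := by positivity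
    rw [lt_div_iff₀ hr3] at hlam1
    have h : ((r:ℕ)^3 * l : ℝ) < (N:ℝ) := by push_cast; nlinarith
    exact_mod_cast h
  have hdl : d ≤ l := le_trans (Nat.le_mul_of_pos_left d hr0) hrdl
  -- key counting inequalities
  have hG1 : (r+1) * ((r-1)*l + d) < N := by
    rw [hsub]
    have key : (r+1) * (e*l + d) ≤ r^3 * l := by
      rw [hre] at hrdl ⊢
      exact auxG1' e l d he1 hrdl
    omega
  have hG2 : (r+1) * (c*l + r*d) < N := by
    have key : 2*((r+1) * (c*l + r*d)) ≤ 2*(r^3 * l) := by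
      rw [hre] at hrdl hc2 ⊢
      rw [Nat.add_sub_cancel] at hc2
      exact auxG2' e l d c he1 hrdl hc2
    omega
  have hCN : c*l + r*d < N := by
    have : c*l + r*d ≤ (r+1)*(c*l + r*d) := Nat.le_mul_of_pos_left _ (by omega)
    omega
  -- membership facts
  have hbig : ∀ a ∈ Dr, N ≤ a + (c*l + r*d) ∧ a + (c*l + r) ≤ N := by
    intro a ha
    rw [hDr] at ha
    simp only [Finset.mem_image] at ha
    obtain ⟨x, hxD, rfl⟩ := ha
    have hx := hD hxD
    rw [Finset.mem_Icc] at hx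
    have h1 : r*x ≤ r*d := Nat.mul_le_mul_left _ hx.2
    have h2 : r ≤ r*x := Nat.le_mul_of_pos_right _ (by omega)
    set u := c*l with hu
    set v := r*x with hv
    set w := r*d with hw
    omega
  have hsm : ∀ i : Fin (r+1), b i ∉ Dr → 1 ≤ b i ∧ b i ≤ (r-1)*l + d := by
    intro i hi
    have hb := hbA i
    rw [hA, Finset.mem_union] at hb
    rcases hb with hb | hb
    · rw [Finset.mem_biUnion] at hb
      obtain ⟨j, hj, hb⟩ := hb
      rw [Finset.mem_image] at hb
      obtain ⟨x, hxD, hbe⟩ := hb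
      have hx := hD hxD
      rw [Finset.mem_Icc] at hx
      rw [Finset.mem_range] at hj
      have hjl : j * l ≤ (r-1) * l := Nat.mul_le_mul_right _ (by omega)
      constructor <;> omega
    · exact absurd hb hi
  -- the counting argument
  set T := Finset.univ.filter (fun i : Fin (r+1) => b i ∈ Dr) with hT
  set T' := Finset.univ.filter (fun i : Fin (r+1) => ¬ (b i ∈ Dr)) with hT'
  set k := T.card with hk
  have hsplit : (∑ i ∈ T, b i) + (∑ i ∈ T', b i) = ∑ i, b i :=
    Finset.sum_filter_add_sum_filter_not _ _ _
  have hcard : k + T'.card = r + 1 := by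
    rw [hk, hT, hT']
    rw [Finset.card_filter_add_card_filter_not]
    simp
  have hkle : k ≤ r + 1 := by omega
  -- sum bounds on T
  have hub_T : (∑ i ∈ T, b i) + k * (c*l + r) ≤ k * N := by
    have h := Finset.sum_le_sum (s := T) (f := fun i => b i + (c*l + r)) (g := fun _ => N)
      (fun i hi => (hbig _ ((Finset.mem_filter.mp hi).2)).2)
    rw [Finset.sum_add_distrib, Finset.sum_const, smul_eq_mul] at h
    simpa [mul_comm] using h
  have hlb_T : k * N ≤ (∑ i ∈ T, b i) + k * (c*l + r*d) := by
    have h := Finset.sum_le_sum (s := T) (f := fun _ => N) (g := fun i => b i + (c*l + r*d))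
      (fun i hi => (hbig _ ((Finset.mem_filter.mp hi).2)).1)
    rw [Finset.sum_add_distrib, Finset.sum_const, smul_eq_mul] at h
    simpa [mul_comm] using h
  -- sum bounds on T'
  have hub_T' : (∑ i ∈ T', b i) ≤ T'.card * ((r-1)*l + d) := by
    have h := Finset.sum_le_card_nsmul T' (fun i => b i) ((r-1)*l + d)
      (fun i hi => (hsm _ ((Finset.mem_filter.mp hi).2)).2)
    simpa using h
  have hlb_T' : T'.card ≤ ∑ i ∈ T', b i := by
    have h := Finset.card_nsmul_le_sum T' (fun i => b i) 1
      (fun i hi => (hsm _ ((Finset.mem_filter.mp hi).2)).1)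
    simpa using h
  -- total sum is a multiple of N
  obtain ⟨m, hm⟩ : N ∣ ∑ i, b i := Nat.dvd_of_mod_eq_zero hsum
  -- m = k
  have hkbound : k * (c*l + r*d) < N := by
    have : k * (c*l + r*d) ≤ (r+1) * (c*l + r*d) := Nat.mul_le_mul_right _ hkle
    omega
  have hT'bound : T'.card * ((r-1)*l + d) < N := by
    have : T'.card * ((r-1)*l + d) ≤ (r+1) * ((r-1)*l + d) :=
      Nat.mul_le_mul_right _ (by omega)
    omega
  have hup : (∑ i, b i) < (k+1) * N := by
    have h1 : (∑ i ∈ T, b i) ≤ k * N := by omega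
    calc (∑ i, b i) = (∑ i ∈ T, b i) + (∑ i ∈ T', b i) := hsplit.symm
    _ ≤ k * N + T'.card * ((r-1)*l + d) := by omega
    _ < k * N + N := by omega
    _ = (k+1) * N := by ring
  have hlo : k * N < (∑ i, b i) + N := by
    have h1 : k * N ≤ (∑ i ∈ T, b i) + k * (c*l + r*d) := hlb_T
    have h2 : (∑ i ∈ T, b i) ≤ ∑ i, b i := by omega
    omega
  have hmk : m = k := by
    rw [hm] at hup hlo
    have h1 : m < k + 1 := by
      refine Nat.lt_of_mul_lt_mul_left (a := N) ?_
      calc N * m < (k+1) * N := hup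
      _ = N * (k+1) := mul_comm _ _
    have h2 : k < m + 1 := by
      refine Nat.lt_of_mul_lt_mul_left (a := N) ?_
      calc N * k = k * N := mul_comm _ _
      _ < N * m + N := hlo
      _ = N * (m + 1) := by ring
    omega
  have hSk : (∑ i, b i) = k * N := by rw [hm, hmk]; ring
  -- k ≥ 1
  have hk1 : 1 ≤ k := by
    by_contra h
    push_neg at h
    have hk0 : k = 0 := by omega
    rw [hk0] at hSk hcard
    simp only [zero_mul, zero_add] at hSk hcard
    omega
  -- k ≤ 1
  have hk2 : k ≤ 1 := by
    by_contra h
    push_neg at h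
    -- k ≥ 2
    have hST' : k * (c*l + r) ≤ ∑ i ∈ T', b i := by omega
    have h2k : 2 * (c*l + r) ≤ k * (c*l + r) := Nat.mul_le_mul_right _ h
    have hT'c : T'.card ≤ r - 1 := by omega
    have hub2 : (∑ i ∈ T', b i) ≤ (r-1) * ((r-1)*l + d) := by
      calc (∑ i ∈ T', b i) ≤ T'.card * ((r-1)*l + d) := hub_T'
      _ ≤ (r-1) * ((r-1)*l + d) := Nat.mul_le_mul_right _ hT'c
    have hfinal : r*(r-1)*l + 2*r ≤ (r-1)*((r-1)*l + d) := by
      have hcl : 2*(c*l) = r*(r-1)*l := by rw [← mul_assoc, ← hc2]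
      omega
    rw [hsub] at hfinal
    rw [hre] at hfinal
    have h1 : e*(e*l + d) = e*e*l + e*d := by ring
    have h2 : (e+1)*e*l = e*e*l + e*l := by ring
    have h3 : e*d ≤ e*l := Nat.mul_le_mul_left e hdl
    omega
  have hkone : k = 1 := by omega
  obtain ⟨a, ha⟩ := Finset.card_eq_one.mp hkone
  refine ⟨a, ?_, ?_⟩
  · have : a ∈ T := by rw [ha]; exact Finset.mem_singleton_self a
    exact (Finset.mem_filter.mp this).2
  · intro j hj
    have : j ∈ T := Finset.mem_filter.mpr ⟨Finset.mem_univ _, hj⟩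
    rw [ha, Finset.mem_singleton] at this
    exact this
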